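/- If Γ is a PTFA group, then the integral group ring ℤΓ (the monoid algebra of Γ with coefficients in ℤ) is a domain: it is nontrivial and has no zero divisors. -/

import Mathlib

theorem exists_cone (Q : Type*) [Group Q]
    (hc : ∀ x y : Q, x * y = y * x)
    (htf : ∀ (x : Q) (k : ℕ), 0 < k → x ^ k = 1 → x = 1) :
    ∃ C : Set Q, (∀ x ∈ C, ∀ y ∈ C, x * y ∈ C) ∧
      (∀ x : Q, x ≠ 1 → x ∈ C ∨ x⁻¹ ∈ C) ∧
      (∀ x : Q, ¬ (x ∈ C ∧ x⁻¹ ∈ C)) := by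
  classical
  letI : AddCommGroup (Additive Q) :=
    { (inferInstance : AddGroup (Additive Q)) with
      add_comm := fun x y => hc (Additive.toMul x) (Additive.toMul y) }
  set S := nonZeroDivisors ℤ
  let V := LocalizedModule S (Additive Q)
  let f := LocalizedModule.mkLinearMap S (Additive Q)
  have hker : ∀ q : Q, f (Additive.ofMul q) = 0 → q = 1 := by
    intro q hq
    have hmk : (LocalizedModule.mk (Additive.ofMul q) 1 : V) = LocalizedModule.mk (0 : Additive Q) 1 := by
      rw [LocalizedModule.zero_mk]
      exact hq
    obtain ⟨u, hu⟩ := LocalizedModule.mk_eq.mp hmk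
    simp only [one_smul, smul_zero] at hu
    set r : ℤ := (u : ℤ) with hr_def
    have hr0 : r ≠ 0 := nonZeroDivisors.ne_zero u.2
    have hrq : r • (Additive.ofMul q) = 0 := hu
    have hpow : q ^ r = 1 := by
      have := congrArg Additive.toMul hrq
      simpa [← ofMul_zpow] using hrq
    have hna : q ^ (r.natAbs) = 1 := by
      rcases Int.natAbs_eq r with h | h
      · rw [← zpow_natCast, ← h, hpow]
      · rw [← zpow_natCast]
        have : q ^ (-(r.natAbs : ℤ)) = 1 := by rw [← h, hpow]
        rw [zpow_neg] at this
        simpa using this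
    exact htf q r.natAbs (Int.natAbs_pos.mpr hr0) hna
  letI : Module ℚ V := LocalizedModule.moduleOfIsLocalization
  let b := Module.Basis.ofVectorSpace ℚ V
  letI : LinearOrder (Module.Basis.ofVectorSpaceIndex ℚ V) := IsWellOrder.linearOrder WellOrderingRel
  let E : Q → Lex ((Module.Basis.ofVectorSpaceIndex ℚ V) →₀ ℚ) :=
    fun q => toLex (b.repr (f (Additive.ofMul q)))
  have hadd : ∀ x y : Q, E (x * y) = E x + E y := by
    intro x y
    show toLex (b.repr (f (Additive.ofMul x + Additive.ofMul y))) = _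
    rw [map_add, map_add]
    rfl
  have hzero : E 1 = 0 := by
    show toLex (b.repr (f (0 : Additive Q))) = 0
    rw [map_zero, map_zero]
    rfl
  have hinv : ∀ x : Q, E x⁻¹ = - E x := by
    intro x
    have h := hadd x x⁻¹
    rw [mul_inv_cancel, hzero] at h
    exact (neg_eq_of_add_eq_zero_right h.symm).symm
  have hEne : ∀ q : Q, q ≠ 1 → E q ≠ 0 := by
    intro q hq hEq
    apply hq
    apply hker
    have : b.repr (f (Additive.ofMul q)) = 0 := hEq
    simpa using (b.repr.map_eq_zero_iff.mp this)
  refine ⟨{q | 0 < E q}, ?_, ?_, ?_⟩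
  · intro x hx y hy
    have : 0 < E x + E y := add_pos hx hy
    simpa [Set.mem_setOf_eq, hadd] using this
  · intro x hx
    rcases lt_trichotomy (E x) 0 with h | h | h
    · right
      simpa [Set.mem_setOf_eq, hinv] using neg_pos.mpr h
    · exact absurd h (hEne x hx)
    · exact Or.inl h
  · rintro x ⟨h1, h2⟩
    rw [Set.mem_setOf_eq, hinv, neg_pos] at h2
    exact lt_asymm h1 h2



/-- A group `Γ` is poly-torsion-free-abelian (PTFA) if it admits a finite normal series
`1 = Gₙ ◁ Gₙ₋₁ ◁ ⋯ ◁ G₀ = Γ` of subgroups such that each successive quotient `Gᵢ/Gᵢ₊₁` is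
torsion-free abelian.  Here `G 0 = Γ` and `G (last) = 1`, each `G (i+1)` is normal in `G i`
(expressed by closure under conjugation by elements of `G i`), the quotient `G i / G (i+1)`
is abelian (expressed by all commutators of elements of `G i` lying in `G (i+1)`), and the
quotient is torsion-free (expressed by: if a positive power of an element of `G i` lies in
`G (i+1)`, then the element itself lies in `G (i+1)`). -/
def IsPTFA (Γ : Type*) [Group Γ] : Prop :=
  ∃ (n : ℕ) (G : Fin (n + 1) → Subgroup Γ),
    G 0 = ⊤ ∧ G (Fin.last n) = ⊥ ∧
    ∀ i : Fin n,
      G i.succ ≤ G i.castSucc ∧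
      (∀ a ∈ G i.castSucc, ∀ b ∈ G i.succ, a * b * a⁻¹ ∈ G i.succ) ∧
      (∀ a ∈ G i.castSucc, ∀ b ∈ G i.castSucc, a * b * a⁻¹ * b⁻¹ ∈ G i.succ) ∧
      (∀ a ∈ G i.castSucc, ∀ k : ℕ, 0 < k → a ^ k ∈ G i.succ → a ∈ G i.succ)

theorem IsPTFA.exists_pos_cone (Γ : Type*) [Group Γ] (h : IsPTFA Γ) :
    ∃ P : Set Γ,
      (∀ g ∈ P, ∀ h ∈ P, g * h ∈ P) ∧
      (∀ g : Γ, g ≠ 1 → g ∈ P ∨ g⁻¹ ∈ P) ∧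
      (∀ g : Γ, ¬ (g ∈ P ∧ g⁻¹ ∈ P)) := by
  classical
  obtain ⟨n, G, hG0, hGlast, hstep⟩ := h
  -- the chain is antitone
  have hanti : ∀ (a b : ℕ) (ha : a < n + 1) (hb : b < n + 1), a ≤ b →
      G ⟨b, hb⟩ ≤ G ⟨a, ha⟩ := by
    intro a b
    induction b with
    | zero =>
      intro ha hb hab
      obtain rfl : a = 0 := Nat.le_zero.mp hab
      exact le_refl _
    | succ b ih =>
      intro ha hb hab
      rcases Nat.eq_or_lt_of_le hab with rfl | hlt
      · exact le_refl _
      · have hb' : b < n + 1 := Nat.lt_of_succ_lt hb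
        have h1 : G ⟨b + 1, hb⟩ ≤ G ⟨b, hb'⟩ := (hstep ⟨b, Nat.lt_of_succ_lt_succ hb⟩).1
        exact le_trans h1 (ih ha hb' (Nat.lt_succ_iff.mp hlt))
  -- per-level cones
  have key : ∀ i : Fin n, ∃ C : Set Γ,
      (∀ g ∈ C, g ∈ G i.castSucc ∧ g ∉ G i.succ) ∧
      (∀ g ∈ C, ∀ h ∈ C, g * h ∈ C) ∧
      (∀ g ∈ C, ∀ h ∈ G i.succ, g * h ∈ C ∧ h * g ∈ C) ∧
      (∀ g, g ∈ G i.castSucc → g ∉ G i.succ → g ∈ C ∨ g⁻¹ ∈ C) ∧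
      (∀ g, ¬ (g ∈ C ∧ g⁻¹ ∈ C)) := by
    intro i
    obtain ⟨hle, hconj, hcomm, htf⟩ := hstep i
    set H := G i.castSucc with hH
    let N : Subgroup H := (G i.succ).subgroupOf H
    haveI hN : N.Normal := by
      refine ⟨?_⟩
      rintro ⟨x, hx⟩ hxN ⟨g, hg⟩
      rw [Subgroup.mem_subgroupOf] at hxN ⊢
      exact hconj g hg x hxN
    have hmk_one : ∀ (g : H), (QuotientGroup.mk g : H ⧸ N) = 1 ↔ (g : Γ) ∈ G i.succ := by
      intro g
      rw [QuotientGroup.eq_one_iff, Subgroup.mem_subgroupOf]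
    have hQcomm : ∀ a b : H ⧸ N, a * b = b * a := by
      intro a b
      induction a using QuotientGroup.induction_on with
      | H a =>
      induction b using QuotientGroup.induction_on with
      | H b =>
      rw [← QuotientGroup.mk_mul, ← QuotientGroup.mk_mul, QuotientGroup.eq,
        Subgroup.mem_subgroupOf]
      have hcm := hcomm (b : Γ)⁻¹ (inv_mem b.2) (a : Γ)⁻¹ (inv_mem a.2)
      have : (((a * b)⁻¹ * (b * a) : H) : Γ) = (b:Γ)⁻¹ * (a:Γ)⁻¹ * ((b:Γ)⁻¹)⁻¹ * ((a:Γ)⁻¹)⁻¹ := by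
        push_cast
        group
      rw [this]
      exact hcm
    have hQtf : ∀ (x : H ⧸ N) (k : ℕ), 0 < k → x ^ k = 1 → x = 1 := by
      intro x k hk hxk
      induction x using QuotientGroup.induction_on with
      | H a =>
      rw [← QuotientGroup.mk_pow, hmk_one] at hxk
      rw [hmk_one]
      exact htf (a : Γ) a.2 k hk (by simpa using hxk)
    obtain ⟨C0, hC0mul, hC0tri, hC0exc⟩ := exists_cone (H ⧸ N) hQcomm hQtf
    have h1C0 : (1 : H ⧸ N) ∉ C0 := fun h1 => hC0exc 1 ⟨h1, by simpa using h1⟩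
    refine ⟨{g | ∃ hg : g ∈ H, (QuotientGroup.mk (⟨g, hg⟩ : H) : H ⧸ N) ∈ C0}, ?_, ?_, ?_, ?_, ?_⟩
    · rintro g ⟨hg, hmem⟩
      refine ⟨hg, fun hgs => ?_⟩
      rw [show (QuotientGroup.mk (⟨g, hg⟩ : H) : H ⧸ N) = 1 from (hmk_one _).mpr hgs] at hmem
      exact h1C0 hmem
    · rintro g ⟨hg, hmemg⟩ h ⟨hh, hmemh⟩
      refine ⟨mul_mem hg hh, ?_⟩
      have : (QuotientGroup.mk (⟨g * h, mul_mem hg hh⟩ : H) : H ⧸ N)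
          = QuotientGroup.mk (⟨g, hg⟩ : H) * QuotientGroup.mk (⟨h, hh⟩ : H) := rfl
      rw [this]
      exact hC0mul _ hmemg _ hmemh
    · rintro g ⟨hg, hmemg⟩ h hhs
      have hh : h ∈ H := hle hhs
      have hmkh : (QuotientGroup.mk (⟨h, hh⟩ : H) : H ⧸ N) = 1 := (hmk_one _).mpr hhs
      constructor
      · refine ⟨mul_mem hg hh, ?_⟩
        have : (QuotientGroup.mk (⟨g * h, mul_mem hg hh⟩ : H) : H ⧸ N)
            = QuotientGroup.mk (⟨g, hg⟩ : H) * QuotientGroup.mk (⟨h, hh⟩ : H) := rfl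
        rw [this, hmkh, mul_one]
        exact hmemg
      · refine ⟨mul_mem hh hg, ?_⟩
        have : (QuotientGroup.mk (⟨h * g, mul_mem hh hg⟩ : H) : H ⧸ N)
            = QuotientGroup.mk (⟨h, hh⟩ : H) * QuotientGroup.mk (⟨g, hg⟩ : H) := rfl
        rw [this, hmkh, one_mul]
        exact hmemg
    · intro g hg hgs
      have hne : (QuotientGroup.mk (⟨g, hg⟩ : H) : H ⧸ N) ≠ 1 := fun hone =>
        hgs ((hmk_one _).mp hone)
      rcases hC0tri _ hne with h1 | h1
      · exact Or.inl ⟨hg, h1⟩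
      · refine Or.inr ⟨inv_mem hg, ?_⟩
        have : (QuotientGroup.mk (⟨g⁻¹, inv_mem hg⟩ : H) : H ⧸ N)
            = (QuotientGroup.mk (⟨g, hg⟩ : H) : H ⧸ N)⁻¹ := rfl
        rw [this]
        exact h1
    · rintro g ⟨⟨hg, h1⟩, ⟨hg', h2⟩⟩
      have : (QuotientGroup.mk (⟨g⁻¹, hg'⟩ : H) : H ⧸ N)
          = (QuotientGroup.mk (⟨g, hg⟩ : H) : H ⧸ N)⁻¹ := by
        congr 1
      rw [this] at h2
      exact hC0exc _ ⟨h1, h2⟩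
  choose C hbound hmul hstab htri hexc using key
  -- inclusion between levels
  have hlevel_le : ∀ i j : Fin n, (i : ℕ) < (j : ℕ) → G j.castSucc ≤ G i.succ := by
    intro i j hij
    exact hanti ((i : ℕ) + 1) (j : ℕ) (Nat.succ_lt_succ i.2) (Nat.lt_succ_of_lt j.2) hij
  refine ⟨{g | ∃ i, g ∈ C i}, ?_, ?_, ?_⟩
  · rintro g ⟨i, hgi⟩ h ⟨j, hhj⟩
    rcases lt_trichotomy (i : ℕ) (j : ℕ) with hij | hij | hij
    · have : h ∈ G i.succ := hlevel_le i j hij (hbound j h hhj).1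
      exact ⟨i, (hstab i g hgi h this).1⟩
    · have : i = j := Fin.ext hij
      subst this
      exact ⟨i, hmul i g hgi h hhj⟩
    · have : g ∈ G j.succ := hlevel_le j i hij (hbound i g hgi).1
      exact ⟨j, (hstab j h hhj g this).2⟩
  · intro g hg
    have hex : ∃ k : ℕ, ∃ hk : k < n + 1, g ∉ G ⟨k, hk⟩ := by
      refine ⟨n, Nat.lt_succ_self n, ?_⟩
      have : G ⟨n, Nat.lt_succ_self n⟩ = ⊥ := by
        have : (⟨n, Nat.lt_succ_self n⟩ : Fin (n + 1)) = Fin.last n := rfl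
        rw [this, hGlast]
      rw [this]
      simpa using hg
    obtain ⟨hklt, hknot⟩ := Nat.find_spec hex
    have hk0 : Nat.find hex ≠ 0 := by
      intro hk0
      apply hknot
      have e : (⟨Nat.find hex, hklt⟩ : Fin (n + 1)) = 0 := by
        apply Fin.ext
        simpa using hk0
      rw [e, hG0]
      trivial
    obtain ⟨m, hm⟩ : ∃ m, Nat.find hex = m + 1 := ⟨Nat.find hex - 1, by omega⟩
    have hmn : m < n := by omega
    have hgin : g ∈ G ⟨m, by omega⟩ := by
      by_contra hcon
      exact Nat.find_min hex (by omega : m < Nat.find hex) ⟨by omega, hcon⟩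
    have hgout : g ∉ G ⟨m + 1, by omega⟩ := by
      have e : (⟨m + 1, by omega⟩ : Fin (n + 1)) = ⟨Nat.find hex, hklt⟩ := by
        apply Fin.ext
        exact hm.symm
      rw [e]
      exact hknot
    set i : Fin n := ⟨m, hmn⟩
    have h1 : g ∈ G i.castSucc := hgin
    have h2 : g ∉ G i.succ := hgout
    rcases htri i g h1 h2 with hc | hc
    · exact Or.inl ⟨i, hc⟩
    · exact Or.inr ⟨i, hc⟩
  · rintro g ⟨⟨i, hgi⟩, ⟨j, hgj⟩⟩
    have hij : i = j := by
      rcases lt_trichotomy (i : ℕ) (j : ℕ) with hij | hij | hij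
      · exact absurd (hlevel_le i j hij (hbound j g⁻¹ hgj).1)
          (by simpa using fun hmem => (hbound i g hgi).2 hmem)
      · exact Fin.ext hij
      · exact absurd (inv_mem (hlevel_le j i hij (hbound i g hgi).1))
          (by simpa using (hbound j g⁻¹ hgj).2)
    subst hij
    exact hexc i g ⟨hgi, hgj⟩

/-- If `Γ` is PTFA, then the integral group ring `ℤΓ` (the monoid algebra `MonoidAlgebra ℤ Γ`)
is a domain: it is nontrivial and has no zero divisors. -/
theorem IsPTFA.groupRing_isDomain (Γ : Type*) [Group Γ] (h : IsPTFA Γ) :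
    Nontrivial (MonoidAlgebra ℤ Γ) ∧
      ∀ a b : MonoidAlgebra ℤ Γ, a * b = 0 → a = 0 ∨ b = 0 := by
  classical
  obtain ⟨P, hPmul, hPtri, hPexc⟩ := h.exists_pos_cone
  have h1P : (1 : Γ) ∉ P := fun h1 => hPexc 1 ⟨h1, by simpa using h1⟩
  have hPne : ∀ g ∈ P, g ≠ 1 := fun g hg hg1 => h1P (hg1 ▸ hg)
  letI : LinearOrder Γ :=
    { le := fun a b => a = b ∨ a⁻¹ * b ∈ P
      lt := fun a b => a⁻¹ * b ∈ P
      le_refl := fun a => Or.inl rfl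
      le_trans := by
        rintro a b c (rfl | hab) (rfl | hbc)
        · exact Or.inl rfl
        · exact Or.inr hbc
        · exact Or.inr hab
        · refine Or.inr ?_
          have := hPmul _ hab _ hbc
          simpa [mul_assoc] using this
      le_antisymm := by
        rintro a b (rfl | hab) (h | hba)
        · rfl
        · rfl
        · exact h.symm
        · exact absurd ⟨hab, by simpa [mul_assoc] using hba⟩ (hPexc (a⁻¹ * b))
      le_total := by
        intro a b
        by_cases hab : a = b
        · exact Or.inl (Or.inl hab)
        · rcases hPtri (a⁻¹ * b) (fun hc => hab (by
            have := congrArg (a * ·) hc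
            simpa [mul_assoc] using this.symm)) with hc | hc
          · exact Or.inl (Or.inr hc)
          · exact Or.inr (Or.inr (by simpa [mul_assoc] using hc))
      lt_iff_le_not_ge := by
        intro a b
        constructor
        · intro hab
          refine ⟨Or.inr hab, ?_⟩
          rintro (rfl | hba)
          · exact hPne _ hab (by simp)
          · exact hPexc (a⁻¹ * b) ⟨hab, by simpa [mul_assoc] using hba⟩
        · rintro ⟨rfl | hab, hnba⟩
          · exact absurd (Or.inl rfl) hnba
          · exact hab
      toDecidableLE := fun _ _ => Classical.dec _ }
  haveI : MulLeftStrictMono Γ := ⟨by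
    intro c a b hab
    show (c * a)⁻¹ * (c * b) ∈ P
    have hab' : a⁻¹ * b ∈ P := hab
    simpa [mul_assoc] using hab'⟩
  haveI : TwoUniqueProds Γ := TwoUniqueProds.of_covariant_right
  haveI : UniqueProds Γ := inferInstance
  exact ⟨inferInstance, fun a b hab => mul_eq_zero.mp hab⟩
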